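/- If p is a borderless word (its only border is p itself) and q is a distinct borderless word of the same length over the same finite alphabet, then for all n the number of length-n words avoiding p equals the number of length-n words avoiding q. -/

import Mathlib

open List

/-- A nonempty word `x` is a border of `p` if it is both a prefix and a suffix of `p`. -/
def Border {α : Type*} (x p : List α) : Prop := x ≠ [] ∧ x <+: p ∧ x <:+ p

/-- A proper border is a border different from the word itself. -/
def ProperBorder {α : Type*} (x p : List α) : Prop := Border x p ∧ x ≠ p

/-- The border length set of `p`. -/
def borderLengths {α : Type*} (p : List α) : Set ℕ :=
  {n | ∃ x, Border x p ∧ x.length = n}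

/-- `replL q p w` replaces the leftmost contiguous occurrence of `q` in `w` by `p`
(identity if there is no occurrence). -/
def replL {α : Type*} [DecidableEq α] (q p : List α) : List α → List α
  | [] => []
  | a :: w => if q <+: (a :: w) then p ++ (a :: w).drop q.length else a :: replL q p w

/-- `replR p q w` replaces the rightmost contiguous occurrence of `p` in `w` by `q`
(identity if there is no occurrence). -/
def replR {α : Type*} [DecidableEq α] (p q : List α) : List α → List α
  | [] => []
  | a :: w =>
    if p <:+: w then a :: replR p q w
    else if p <+: (a :: w) then q ++ (a :: w).drop p.length
    else a :: w

/-- `phiL q p w` iterates `replL q p` a minimal number of times so that no occurrence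
of `q` remains (if such an iterate exists). -/
noncomputable def phiL {α : Type*} [DecidableEq α] (q p : List α) (w : List α) : List α :=
  (replL q p)^[sInf {i | ¬ q <:+: (replL q p)^[i] w}] w

/-- `phiR p q w` iterates `replR p q` a minimal number of times so that no occurrence
of `p` remains (if such an iterate exists). -/
noncomputable def phiR {α : Type*} [DecidableEq α] (p q : List α) (w : List α) : List α :=
  (replR p q)^[sInf {j | ¬ p <:+: (replR p q)^[j] w}] w

lemma key_overlap {α : Type*} {p u : List α} (hp : ¬ ∃ x, ProperBorder x p)
    (h : p <:+: p.tail ++ u) : p <:+: u := by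
  obtain ⟨s, t, hst⟩ := h
  rcases le_or_gt (p.length - 1) s.length with hc | hc
  · have h1 : p.tail <+: s :=
      prefix_of_prefix_length_le (⟨u, rfl⟩ : p.tail <+: p.tail ++ u)
        (⟨p ++ t, by simpa using hst⟩) (by simpa [length_tail] using hc)
    obtain ⟨s', rfl⟩ := h1
    have h2 : p.tail ++ (s' ++ p ++ t) = p.tail ++ u := by
      simpa [append_assoc] using hst
    exact ⟨s', t, append_cancel_left h2⟩
  · exfalso
    apply hp
    refine ⟨p.take (p.length - 1 - s.length), ⟨⟨?_, take_prefix _ _, ?_⟩, ?_⟩⟩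
    · have : 0 < p.length - 1 - s.length := by omega
      simp only [ne_eq, take_eq_nil_iff]
      intro hh
      rcases hh with h' | h'
      · omega
      · subst h'; simp at hc
    · -- p.take (m-1-|s|) is a suffix of p
      have htail : p.tail = s ++ p.take (p.length - 1 - s.length) := by
        have : (p.tail ++ u).take (p.length - 1) = p.tail := by
          rw [← length_tail]; exact take_left
        rw [← this, ← hst, append_assoc, take_append,
          take_of_length_le (show s.length ≤ p.length - 1 by omega),
          take_append,
          show p.length - 1 - s.length - p.length = 0 by omega, take_zero, append_nil]
      exact (htail ▸ ⟨s, rfl⟩ : _ <:+ p.tail).trans (tail_suffix p)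
    · intro hh
      have := congrArg length hh
      simp only [length_take] at this
      omega

lemma prefix_of_infix_not_tail {α : Type*} {p w : List α} (h : p <:+: w)
    (h2 : ¬ p <:+: w.tail) : p <+: w := by
  obtain ⟨s, t, hst⟩ := h
  cases s with
  | nil => exact ⟨t, by simpa using hst⟩
  | cons a s' => exact absurd (⟨s', t, by rw [← hst]; simp⟩ : p <:+: w.tail) h2

lemma infix_of_infix_tail {α : Type*} {p w : List α} (h : p <:+: w.tail) : p <:+: w :=
  h.trans (tail_suffix w).isInfix

lemma ncard_cons_set {α : Type*} [Fintype α] (P : List α → Prop) (n : ℕ) :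
    {w : List α | w.length = n + 1 ∧ P w.tail}.ncard =
      Fintype.card α * {v : List α | v.length = n ∧ P v}.ncard := by
  have himg : {w : List α | w.length = n + 1 ∧ P w.tail} =
      (fun cv : α × List α => cv.1 :: cv.2) '' (Set.univ ×ˢ {v | v.length = n ∧ P v}) := by
    ext w
    constructor
    · rintro ⟨hlen, hP⟩
      cases w with
      | nil => simp at hlen
      | cons a v => exact ⟨(a, v), ⟨trivial, by simpa using hlen, hP⟩, rfl⟩
    · rintro ⟨⟨a, v⟩, ⟨-, hv, hP⟩, rfl⟩
      exact ⟨by simpa using hv, hP⟩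
  rw [himg, Set.ncard_image_of_injective _ (fun x y h => by
    simpa [Prod.ext_iff] using h)]
  rw [← Nat.card_coe_set_eq, Nat.card_congr (Equiv.Set.prod _ _), Nat.card_prod,
    Nat.card_coe_set_eq, Nat.card_coe_set_eq, Set.ncard_univ, Nat.card_eq_fintype_card]

lemma count_rec {α : Type*} [Fintype α] {p : List α}
    (hp : ¬ ∃ x, ProperBorder x p) (hp0 : p ≠ []) {n : ℕ} (hn : p.length ≤ n + 1) :
    {w : List α | w.length = n + 1 ∧ ¬ p <:+: w}.ncard +
      {u : List α | u.length = n + 1 - p.length ∧ ¬ p <:+: u}.ncard =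
      Fintype.card α * {v : List α | v.length = n ∧ ¬ p <:+: v}.ncard := by
  classical
  have hfin : Finite α := Finite.of_fintype α
  set m := p.length with hm
  have hm1 : 1 ≤ m := by cases p with | nil => simp at hp0 | cons a l => simp [hm]
  have htailapp : ∀ u : List α, (p ++ u).tail = p.tail ++ u := by
    intro u; cases p with | nil => simp at hp0 | cons a l => simp
  set S1 : Set (List α) := {w | w.length = n + 1 ∧ ¬ p <:+: w} with hS1
  set S2 : Set (List α) := (p ++ ·) '' {u | u.length = n + 1 - m ∧ ¬ p <:+: u} with hS2
  have hunion : {w : List α | w.length = n + 1 ∧ ¬ p <:+: w.tail} = S1 ∪ S2 := by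
    ext w
    constructor
    · rintro ⟨hlen, htl⟩
      by_cases hw : p <:+: w
      · right
        obtain ⟨u, rfl⟩ := prefix_of_infix_not_tail hw htl
        have hlu : u.length = n + 1 - m := by
          have := hlen; simp only [Set.mem_setOf_eq, length_append] at this ⊢; omega
        refine ⟨u, ⟨hlu, ?_⟩, rfl⟩
        intro hu
        exact htl (by rw [htailapp]; exact hu.trans (suffix_append p.tail u).isInfix)
      · exact Or.inl ⟨hlen, hw⟩
    · rintro (⟨hlen, hw⟩ | ⟨u, ⟨hu1, hu2⟩, rfl⟩)
      · exact ⟨hlen, fun h => hw (infix_of_infix_tail h)⟩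
      · refine ⟨by simp [hu1]; omega, ?_⟩
        rw [htailapp]
        intro h
        exact hu2 (key_overlap hp h)
  have hdisj : Disjoint S1 S2 := by
    rw [Set.disjoint_left]
    rintro w ⟨-, hw⟩ ⟨u, -, rfl⟩
    exact hw ((prefix_append p u).isInfix)
  have hfin1 : S1.Finite := (List.finite_length_eq α (n + 1)).subset (fun w hw => hw.1)
  have hfin2 : S2.Finite :=
    ((List.finite_length_eq α (n + 1 - m)).subset (fun u hu => hu.1)).image _
  have := ncard_cons_set (fun v => ¬ p <:+: v) n
  rw [hunion, Set.ncard_union_eq hdisj hfin1 hfin2] at this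
  rw [← this, hS2, Set.ncard_image_of_injective _ (fun x y h => append_cancel_left h)]

theorem stmt_16 {α : Type*} [Fintype α] [DecidableEq α] {p q : List α}
    (hne : p ≠ q) (hlen : p.length = q.length)
    (hp : ¬ ∃ x, ProperBorder x p) (hq : ¬ ∃ x, ProperBorder x q) (n : ℕ) :
    {w : List α | w.length = n ∧ ¬ p <:+: w}.ncard =
      {w : List α | w.length = n ∧ ¬ q <:+: w}.ncard := by
  classical
  have hp0 : p ≠ [] := by
    rintro rfl
    exact hne (by simpa using (length_eq_zero_iff.mp hlen.symm).symm ▸ rfl)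
  have hq0 : q ≠ [] := by
    rintro rfl
    exact hp0 (length_eq_zero_iff.mp (by simpa using hlen))
  set m := p.length with hm
  have hm1 : 1 ≤ m := by cases p with | nil => simp at hp0 | cons a l => simp [hm]
  induction n using Nat.strong_induction_on with
  | _ n ih =>
    rcases lt_or_ge n m with hc | hc
    · have e1 : {w : List α | w.length = n ∧ ¬ p <:+: w} = {w : List α | w.length = n} := by
        ext w
        refine ⟨fun h => h.1, fun h => ⟨h, fun hin => ?_⟩⟩
        have hwn : w.length = n := h
        have h2 := hin.length_le
        omega
      have e2 : {w : List α | w.length = n ∧ ¬ q <:+: w} = {w : List α | w.length = n} := by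
        ext w
        refine ⟨fun h => h.1, fun h => ⟨h, fun hin => ?_⟩⟩
        have hwn : w.length = n := h
        have h2 := hin.length_le
        omega
      rw [e1, e2]
    · obtain ⟨t, rfl⟩ : ∃ t, n = t + 1 := ⟨n - 1, by omega⟩
      have rp := count_rec hp hp0 (show p.length ≤ t + 1 by omega)
      have rq := count_rec hq hq0 (show q.length ≤ t + 1 by omega)
      rw [← hlen] at rq
      have h1 := ih t (by omega)
      have h2 := ih (t + 1 - m) (by omega)
      rw [h1] at rp
      rw [h2] at rp
      omega
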